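/- Let λ > 0, let W be a random variable with density f_W(w) = λ w^{λ-1} on (0,1) (Beta(1,λ) distribution), let Z be a standard normal random variable independent of W, and set X = √W · Z. Then the density of X is f_X(x) = (λ/√π) · 2^{-λ} · (x²)^{λ - 1/2} · Γ(1/2 - λ, x²/2) for x ∈ ℝ, where Γ(p, y) = ∫_y^∞ u^{p-1} e^{-u} du is the upper incomplete Gamma function. -/

import Mathlib

open MeasureTheory Real Set ProbabilityTheory
open scoped ENNReal NNReal

/-- Upper incomplete Gamma function `Γ(p, x) = ∫_x^∞ u^(p-1) e^(-u) du`. -/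
noncomputable def uGamma (p x : ℝ) : ℝ := ∫ u in Set.Ioi x, u ^ (p - 1) * Real.exp (-u)

theorem my_lintegral_image {s : Set ℝ} {f : ℝ → ℝ} {f' : ℝ → ℝ}
    (hs : MeasurableSet s) (hf' : ∀ x ∈ s, HasDerivWithinAt f (f' x) s x)
    (hf : InjOn f s) (g : ℝ → ℝ≥0∞) :
    ∫⁻ x in f '' s, g x = ∫⁻ x in s, ENNReal.ofReal |f' x| * g (f x) := by
  simpa only [ContinuousLinearMap.det_toSpanSingleton] using
    lintegral_image_eq_lintegral_abs_det_fderiv_mul volume hs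
      (fun x hx => (hf' x hx).hasFDerivWithinAt) hf g

lemma real_ident (lam : ℝ) (hlam : 0 < lam) {x w : ℝ} (hx : x ≠ 0) (hw0 : 0 < w) (hw1 : w < 1) :
    lam * w ^ (lam - 1) * ((Real.sqrt (2*π*w))⁻¹ * Real.exp (-(x^2/(2*w)))) =
    lam / Real.sqrt π * 2^(-lam) * (x^2)^(lam - 1/2) *
      ((x^2/2 * (w^2)⁻¹) * ((x^2/2 * w⁻¹) ^ (1/2 - lam - 1) * Real.exp (-(x^2/2 * w⁻¹)))) := by
  have hx2 : (0:ℝ) < x^2 := by positivity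
  have hπ : (0:ℝ) < π := pi_pos
  have hE : -(x^2/2 * w⁻¹) = -(x^2/(2*w)) := by ring
  have hb : (0:ℝ) < x^2/2 * w⁻¹ := by positivity
  have h2πw : (0:ℝ) < 2*π*w := by positivity
  have hwp := Real.rpow_pos_of_pos hw0 (lam-1)
  have hsq := Real.sqrt_pos.mpr h2πw
  have hsqπ := Real.sqrt_pos.mpr hπ
  have h2l := Real.rpow_pos_of_pos two_pos (-lam)
  have hx2l := Real.rpow_pos_of_pos hx2 (lam-1/2)
  have hbq := Real.rpow_pos_of_pos hb (1/2-lam-1)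
  rw [hE]
  have hL : 0 < lam * w ^ (lam - 1) * ((Real.sqrt (2*π*w))⁻¹ * Real.exp (-(x^2/(2*w)))) := by
    positivity
  have hR : 0 < lam / Real.sqrt π * 2^(-lam) * (x^2)^(lam - 1/2) *
      ((x^2/2 * (w^2)⁻¹) * ((x^2/2 * w⁻¹) ^ (1/2 - lam - 1) * Real.exp (-(x^2/(2*w))))) := by
    positivity
  apply Real.log_injOn_pos (mem_Ioi.mpr hL) (mem_Ioi.mpr hR)
  have l2 : Real.log (Real.sqrt (2*π*w)) = (Real.log 2 + Real.log π + Real.log w)/2 := by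
    rw [Real.log_sqrt h2πw.le, Real.log_mul (mul_ne_zero two_ne_zero hπ.ne') hw0.ne',
      Real.log_mul two_ne_zero hπ.ne']
  rw [Real.log_mul (mul_ne_zero hlam.ne' hwp.ne')
        (mul_ne_zero (inv_ne_zero hsq.ne') (Real.exp_ne_zero _)),
      Real.log_mul hlam.ne' hwp.ne',
      Real.log_mul (inv_ne_zero hsq.ne') (Real.exp_ne_zero _),
      Real.log_inv, l2, Real.log_rpow hw0,
      Real.log_mul (mul_ne_zero (mul_ne_zero (div_ne_zero hlam.ne' hsqπ.ne') h2l.ne') hx2l.ne')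
        (mul_ne_zero (mul_ne_zero (div_ne_zero hx2.ne' two_ne_zero)
          (inv_ne_zero (pow_pos hw0 2).ne'))
          (mul_ne_zero hbq.ne' (Real.exp_ne_zero _))),
      Real.log_mul (mul_ne_zero (div_ne_zero hlam.ne' hsqπ.ne') h2l.ne') hx2l.ne',
      Real.log_mul (div_ne_zero hlam.ne' hsqπ.ne') h2l.ne',
      Real.log_div hlam.ne' hsqπ.ne', Real.log_sqrt hπ.le,
      Real.log_rpow two_pos, Real.log_rpow hx2,
      Real.log_mul (mul_ne_zero (div_ne_zero hx2.ne' two_ne_zero)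
        (inv_ne_zero (pow_pos hw0 2).ne'))
        (mul_ne_zero hbq.ne' (Real.exp_ne_zero _)),
      Real.log_mul (div_ne_zero hx2.ne' two_ne_zero) (inv_ne_zero (pow_pos hw0 2).ne'),
      Real.log_div hx2.ne' two_ne_zero,
      Real.log_mul hbq.ne' (Real.exp_ne_zero _),
      Real.log_rpow hb,
      Real.log_mul (div_ne_zero hx2.ne' two_ne_zero) (inv_ne_zero hw0.ne'),
      Real.log_div hx2.ne' two_ne_zero]
  simp only [Real.log_inv, Real.log_exp, Real.log_pow]
  push_cast
  ring


lemma key_lemma (lam : ℝ) (hlam : 0 < lam) {x : ℝ} (hx : x ≠ 0) :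
    ∫⁻ w in Ioo (0:ℝ) 1,
        ENNReal.ofReal (lam * w ^ (lam - 1) * ((Real.sqrt (2*π*w))⁻¹ * Real.exp (-(x^2/(2*w)))))
      = ENNReal.ofReal
          (lam / Real.sqrt π * 2 ^ (-lam) * (x ^ 2) ^ (lam - 1 / 2) *
            uGamma (1 / 2 - lam) (x ^ 2 / 2)) := by
  have hx2 : (0:ℝ) < x^2 := by positivity
  have hy : (0:ℝ) < x^2/2 := by positivity
  have hC : (0:ℝ) ≤ lam / Real.sqrt π * 2 ^ (-lam) * (x ^ 2) ^ (lam - 1 / 2) := by positivity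
  set f : ℝ → ℝ := fun w => x^2/2 * w⁻¹ with hf
  set f' : ℝ → ℝ := fun w => x^2/2 * -((w^2)⁻¹) with hf'
  have hderiv : ∀ w ∈ Ioo (0:ℝ) 1, HasDerivWithinAt f (f' w) (Ioo (0:ℝ) 1) w := by
    intro w hw
    exact ((hasDerivAt_inv hw.1.ne').const_mul (x^2/2)).hasDerivWithinAt
  have hinj : InjOn f (Ioo (0:ℝ) 1) := by
    intro a _ b _ h
    exact inv_injective (mul_left_cancel₀ hy.ne' h)
  have himg : f '' Ioo (0:ℝ) 1 = Ioi (x^2/2) := by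
    ext u
    simp only [mem_image, mem_Ioo, mem_Ioi]
    constructor
    · rintro ⟨w, ⟨hw0, hw1⟩, rfl⟩
      have h1 : 1 < w⁻¹ := one_lt_inv_iff₀.mpr ⟨hw0, hw1⟩
      calc x^2/2 = x^2/2 * 1 := (mul_one _).symm
        _ < f w := by exact mul_lt_mul_of_pos_left h1 hy
    · intro hu
      have hu0 : 0 < u := lt_trans hy hu
      refine ⟨x^2/2 / u, ⟨by positivity, (div_lt_one hu0).mpr hu⟩, ?_⟩
      simp only [hf]
      field_simp
  have hInt : IntegrableOn (fun u => u ^ ((1/2 - lam) - 1) * Real.exp (-u)) (Ioi (x^2/2)) := by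
    have hbnd : IntegrableOn (fun u => (x^2/2) ^ ((1/2 - lam) - 1) * Real.exp (-u)) (Ioi (x^2/2)) := by
      have := exp_neg_integrableOn_Ioi (x^2/2) (b := 1) one_pos
      simp only [neg_one_mul] at this
      exact this.const_mul _
    refine hbnd.mono' ?_ ?_
    · exact ((measurable_id.pow_const _).mul (measurable_exp.comp measurable_neg)).aestronglyMeasurable
    · filter_upwards [ae_restrict_mem measurableSet_Ioi] with u hu
      have hu0 : 0 < u := lt_trans hy hu
      have h1 : u ^ ((1/2 - lam) - 1) ≤ (x^2/2) ^ ((1/2 - lam) - 1) :=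
        Real.rpow_le_rpow_of_nonpos hy hu.le (by linarith)
      rw [norm_mul, norm_of_nonneg (Real.rpow_nonneg hu0.le _),
        norm_of_nonneg (Real.exp_pos _).le]
      exact mul_le_mul_of_nonneg_right h1 (Real.exp_pos _).le
  have hofReal : ENNReal.ofReal (uGamma (1/2 - lam) (x^2/2))
      = ∫⁻ u in Ioi (x^2/2), ENNReal.ofReal (u ^ ((1/2 - lam) - 1) * Real.exp (-u)) := by
    rw [uGamma]
    refine ofReal_integral_eq_lintegral_ofReal hInt ?_
    filter_upwards [ae_restrict_mem measurableSet_Ioi] with u hu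
    have hu0 : 0 < u := lt_trans hy hu
    positivity
  calc ∫⁻ w in Ioo (0:ℝ) 1,
        ENNReal.ofReal (lam * w ^ (lam - 1) * ((Real.sqrt (2*π*w))⁻¹ * Real.exp (-(x^2/(2*w)))))
      = ∫⁻ w in Ioo (0:ℝ) 1,
          ENNReal.ofReal (lam / Real.sqrt π * 2 ^ (-lam) * (x ^ 2) ^ (lam - 1 / 2)) *
            (ENNReal.ofReal |f' w| *
              ENNReal.ofReal ((f w) ^ ((1/2 - lam) - 1) * Real.exp (-(f w)))) := by
        refine setLIntegral_congr_fun measurableSet_Ioo (fun w hw => ?_) 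
        rw [← ENNReal.ofReal_mul (abs_nonneg _), ← ENNReal.ofReal_mul hC]
        apply congrArg
        have habs : |f' w| = x^2/2 * (w^2)⁻¹ := by
          have h1 : f' w = -(x^2/2 * (w^2)⁻¹) := by simp only [hf']; ring
          rw [h1, abs_neg, abs_of_pos (mul_pos hy (inv_pos.mpr (pow_pos hw.1 2)))]
        rw [habs]
        have := real_ident lam hlam hx hw.1 hw.2
        simpa only [mul_assoc] using this
      _ = ENNReal.ofReal (lam / Real.sqrt π * 2 ^ (-lam) * (x ^ 2) ^ (lam - 1 / 2)) *
            ∫⁻ w in Ioo (0:ℝ) 1, ENNReal.ofReal |f' w| *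
              ENNReal.ofReal ((f w) ^ ((1/2 - lam) - 1) * Real.exp (-(f w))) :=
        lintegral_const_mul' _ _ ENNReal.ofReal_ne_top
      _ = ENNReal.ofReal (lam / Real.sqrt π * 2 ^ (-lam) * (x ^ 2) ^ (lam - 1 / 2)) *
            ∫⁻ u in Ioi (x^2/2), ENNReal.ofReal (u ^ ((1/2 - lam) - 1) * Real.exp (-u)) := by
        rw [← my_lintegral_image measurableSet_Ioo hderiv hinj
          (fun u => ENNReal.ofReal (u ^ ((1/2 - lam) - 1) * Real.exp (-u))), himg]
      _ = ENNReal.ofReal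
          (lam / Real.sqrt π * 2 ^ (-lam) * (x ^ 2) ^ (lam - 1 / 2) *
            uGamma (1 / 2 - lam) (x ^ 2 / 2)) := by
        rw [← hofReal, ← ENNReal.ofReal_mul hC]


section plumbing
variable (lam : ℝ)

noncomputable def kfun : ℝ × ℝ → ℝ≥0∞ := fun q =>
  ENNReal.ofReal (if q.1 ∈ Ioo (0:ℝ) 1 then lam * q.1 ^ (lam - 1) else 0) *
  ENNReal.ofReal ((Real.sqrt (2*π*q.1))⁻¹ * Real.exp (-(q.2^2/(2*q.1))))

lemma fW_measurable : Measurable fun w : ℝ =>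
    ENNReal.ofReal (if w ∈ Ioo (0:ℝ) 1 then lam * w ^ (lam - 1) else 0) := by
  apply Measurable.ennreal_ofReal
  exact Measurable.ite measurableSet_Ioo ((measurable_id.pow_const _).const_mul lam)
    measurable_const

lemma kfun_measurable : Measurable (kfun lam) := by
  unfold kfun
  apply Measurable.fun_mul
  · exact (fW_measurable lam).comp measurable_fst
  · apply Measurable.ennreal_ofReal
    apply Measurable.fun_mul
    · exact ((measurable_const.mul measurable_fst).sqrt).inv
    · exact ((measurable_snd.pow_const 2).div (measurable_const.mul measurable_fst)).neg.exp

end plumbing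

lemma main_measure (lam : ℝ) (hlam : 0 < lam) :
    Measure.map (fun p : ℝ × ℝ => Real.sqrt p.1 * p.2)
      ((volume.withDensity fun w =>
          ENNReal.ofReal (if w ∈ Set.Ioo (0:ℝ) 1 then lam * w ^ (lam - 1) else 0)).prod
        (gaussianReal 0 1))
    = volume.withDensity fun x =>
        ENNReal.ofReal
          (lam / Real.sqrt π * 2 ^ (-lam) * (x ^ 2) ^ (lam - 1 / 2) *
            uGamma (1 / 2 - lam) (x ^ 2 / 2)) := by
  have hg : Measurable (fun p : ℝ × ℝ => Real.sqrt p.1 * p.2) :=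
    measurable_fst.sqrt.mul measurable_snd
  ext s hs
  rw [Measure.map_apply hg hs, withDensity_apply _ hs, Measure.prod_apply (hg hs),
    lintegral_withDensity_eq_lintegral_mul volume (fW_measurable lam)
      (measurable_measure_prodMk_left (hg hs))]
  have hsec : ∀ w : ℝ,
      ((fun w : ℝ => ENNReal.ofReal (if w ∈ Ioo (0:ℝ) 1 then lam * w ^ (lam - 1) else 0)) *
        fun w : ℝ => gaussianReal 0 1 (Prod.mk w ⁻¹' ((fun p : ℝ × ℝ => Real.sqrt p.1 * p.2) ⁻¹' s))) w
        = ∫⁻ x in s, kfun lam (w, x) := by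
    intro w
    by_cases hw : w ∈ Ioo (0:ℝ) 1
    · have hw0 : 0 < w := hw.1
      have hpre : (Prod.mk w ⁻¹' ((fun p : ℝ × ℝ => Real.sqrt p.1 * p.2) ⁻¹' s))
          = (fun z => Real.sqrt w * z) ⁻¹' s := rfl
      have hv : (NNReal.mk ((Real.sqrt w)^2) (sq_nonneg _) * 1 : ℝ≥0) = NNReal.mk w hw0.le := by
        ext
        simp [Real.sq_sqrt hw0.le]
      have hvne : (NNReal.mk w hw0.le : ℝ≥0) ≠ 0 := by
        intro h
        exact hw0.ne' (by simpa using congrArg NNReal.toReal h)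
      rw [Pi.mul_apply, hpre, ← Measure.map_apply (measurable_const_mul (Real.sqrt w)) hs,
        gaussianReal_map_const_mul (Real.sqrt w), mul_zero, hv,
        gaussianReal_of_var_ne_zero 0 hvne, withDensity_apply _ hs,
        ← lintegral_const_mul' _ _ ENNReal.ofReal_ne_top]
      refine setLIntegral_congr_fun hs (fun x _ => ?_)
      simp only [kfun, gaussianPDF, gaussianPDFReal, NNReal.coe_mk, sub_zero, neg_div]
    · rw [Pi.mul_apply]
      simp only [kfun, if_neg hw, ENNReal.ofReal_zero, zero_mul, lintegral_zero]
  have hk2 : AEMeasurable (Function.uncurry fun w x => kfun lam (w, x))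
      ((volume : Measure ℝ).prod (volume.restrict s)) :=
    (kfun_measurable lam).aemeasurable
  rw [lintegral_congr hsec, lintegral_lintegral_swap hk2]
  have h0 : ∀ᵐ x : ℝ ∂(volume : Measure ℝ), x ≠ 0 := by
    rw [ae_iff]
    simp [not_not, Set.setOf_eq_eq_singleton]
  refine setLIntegral_congr_fun_ae hs ?_
  filter_upwards [h0] with x hx _
  have hcollapse : (fun w => kfun lam (w, x)) = (Ioo (0:ℝ) 1).indicator fun w =>
      ENNReal.ofReal (lam * w ^ (lam - 1) *
        ((Real.sqrt (2*π*w))⁻¹ * Real.exp (-(x^2/(2*w))))) := by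
    funext w
    by_cases hw : w ∈ Ioo (0:ℝ) 1
    · rw [indicator_of_mem hw]
      simp only [kfun, if_pos hw]
      rw [← ENNReal.ofReal_mul (mul_nonneg hlam.le (Real.rpow_nonneg hw.1.le _))]
    · rw [indicator_of_notMem hw]
      simp only [kfun, if_neg hw, ENNReal.ofReal_zero, zero_mul]
  rw [hcollapse, lintegral_indicator measurableSet_Ioo]
  exact key_lemma lam hlam hx


theorem density_sqrtW_mul_Z
    {Ω : Type*} [MeasureSpace Ω] [IsProbabilityMeasure (ℙ : Measure Ω)]
    (lam : ℝ) (hlam : 0 < lam) (W Z : Ω → ℝ)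
    (hWm : Measurable W) (hZm : Measurable Z)
    (hW : Measure.map W ℙ
      = volume.withDensity fun w =>
          ENNReal.ofReal (if w ∈ Set.Ioo (0:ℝ) 1 then lam * w ^ (lam - 1) else 0))
    (hZ : Measure.map Z ℙ = ProbabilityTheory.gaussianReal 0 1)
    (hindep : ProbabilityTheory.IndepFun W Z ℙ) :
    Measure.map (fun ω => Real.sqrt (W ω) * Z ω) ℙ
      = volume.withDensity fun x =>
          ENNReal.ofReal
            (lam / Real.sqrt Real.pi * 2 ^ (-lam) * (x ^ 2) ^ (lam - 1 / 2) *
              uGamma (1 / 2 - lam) (x ^ 2 / 2)) := by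
  have hg : Measurable (fun p : ℝ × ℝ => Real.sqrt p.1 * p.2) :=
    measurable_fst.sqrt.mul measurable_snd
  have hprod : Measure.map (fun ω => (W ω, Z ω)) ℙ
      = (Measure.map W ℙ).prod (Measure.map Z ℙ) :=
    (indepFun_iff_map_prod_eq_prod_map_map hWm.aemeasurable hZm.aemeasurable).mp hindep
  have hcomp : (fun ω => Real.sqrt (W ω) * Z ω)
      = (fun p : ℝ × ℝ => Real.sqrt p.1 * p.2) ∘ (fun ω => (W ω, Z ω)) := rfl
  rw [hcomp, ← Measure.map_map hg (hWm.prodMk hZm), hprod, hW, hZ]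
  exact main_measure lam hlam
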